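/- Let n be a positive integer, let k_1, …, k_n be positive integers and let k := lcm(k_1, …, k_n). Then E(k_1, …, k_n) := (1/k) · Σ_{j=1}^{k} c_{k_1}(j) ⋯ c_{k_n}(j) = Σ_{d_1 | k_1, …, d_n | k_n} d_1 μ(k_1/d_1) ⋯ d_n μ(k_n/d_n) / lcm(d_1, …, d_n), where μ is the Möbius function and the sum ranges over all n-tuples (d_1, …, d_n) with d_i dividing k_i. -/

import Mathlib

open Finset ArithmeticFunction

/-- The Ramanujan sum `c_k(j) = ∑_{1 ≤ m ≤ k, gcd(m,k)=1} exp(2πimj/k)`. -/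

noncomputable def ramanujanSum (k : ℕ) (j : ℤ) : ℂ :=
  ∑ m ∈ (Finset.Icc 1 k).filter (fun m => Nat.gcd m k = 1),
    Complex.exp (2 * (Real.pi : ℂ) * Complex.I * (m : ℂ) * (j : ℂ) / (k : ℂ))

noncomputable def eterm (k : ℕ) (j : ℤ) (m : ℕ) : ℂ :=
  Complex.exp (2 * (Real.pi : ℂ) * Complex.I * (m : ℂ) * (j : ℂ) / (k : ℂ))

lemma ramanujanSum_def' (k : ℕ) (j : ℤ) :
    ramanujanSum k j = ∑ m ∈ (Finset.Icc 1 k).filter (fun m => Nat.gcd m k = 1), eterm k j m := rfl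

lemma expsum (k : ℕ) (hk : 0 < k) (j : ℤ) :
    ∑ m ∈ Finset.Icc 1 k, eterm k j m = if (k : ℤ) ∣ j then (k : ℂ) else 0 := by
  set Z : ℂ := Complex.exp (2 * (Real.pi : ℂ) * Complex.I * (j : ℂ) / (k : ℂ)) with hZ
  have hkc : (k : ℂ) ≠ 0 := Nat.cast_ne_zero.mpr hk.ne'
  have hexp : ∀ m : ℕ, eterm k j m = Z ^ m := by
    intro m
    rw [eterm, hZ, ← Complex.exp_nat_mul]
    ring_nf
  have hZk : Z ^ k = 1 := by
    rw [hZ, ← Complex.exp_nat_mul]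
    rw [show (k : ℂ) * (2 * (Real.pi : ℂ) * Complex.I * (j : ℂ) / (k : ℂ)) = (j : ℂ) * (2 * Real.pi * Complex.I) by field_simp]
    exact_mod_cast Complex.exp_int_mul_two_pi_mul_I j
  have hone : Z = 1 ↔ (k : ℤ) ∣ j := by
    rw [hZ, Complex.exp_eq_one_iff]
    constructor
    · rintro ⟨m, hm⟩
      have h2 : (2 * (Real.pi : ℂ) * Complex.I) ≠ 0 := by
        simp [Real.pi_ne_zero, Complex.I_ne_zero]
      have : (j : ℂ) = (k : ℂ) * m := by
        field_simp at hm
        have h := mul_left_cancel₀ h2 (show 2 * (Real.pi:ℂ) * Complex.I * (j:ℂ) = 2 * (Real.pi:ℂ) * Complex.I * ((k:ℂ) * m) by linear_combination (2 * (Real.pi:ℂ) * Complex.I) * hm)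
        exact h
      refine ⟨m, ?_⟩
      exact_mod_cast this
    · rintro ⟨m, rfl⟩
      exact ⟨m, by push_cast; field_simp⟩
  simp only [hexp]
  by_cases h : (k : ℤ) ∣ j
  · rw [if_pos h]
    have h1 : Z = 1 := hone.mpr h
    simp only [h1, one_pow, Finset.sum_const, Nat.card_Icc, nsmul_eq_mul, mul_one]
    norm_num
  · have hZ1 : Z ≠ 1 := fun hc => h (hone.mp hc)
    rw [if_neg h]
    have : ∑ m ∈ Finset.Icc 1 k, Z ^ m = Z * ∑ m ∈ Finset.range k, Z ^ m := by
      rw [Finset.mul_sum, ← Finset.Ico_add_one_right_eq_Icc, Finset.sum_Ico_eq_sum_range]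
      simp [pow_succ, pow_add, mul_comm]
    rw [this, geom_sum_eq hZ1, hZk]
    simp

lemma moebius_indicator (n : ℕ) :
    ((if n = 1 then 1 else 0 : ℤ) : ℂ) = ∑ d ∈ n.divisors, (moebius d : ℂ) := by
  have h := congrArg (fun f => f n) moebius_mul_coe_zeta
  simp only [coe_mul_zeta_apply, one_apply] at h
  rw [← h, Int.cast_sum]

lemma eterm_mul (k d : ℕ) (j : ℤ) (t : ℕ) (hdk : d ∣ k) (hd : 0 < d) (hk : 0 < k) :
    eterm k j (d * t) = eterm (k / d) j t := by
  rw [eterm, eterm]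
  congr 1
  have hcast : ((k / d : ℕ) : ℂ) = (k : ℂ) / (d : ℂ) := by
    rw [Nat.cast_div hdk (Nat.cast_ne_zero.mpr hd.ne')]
  rw [hcast]
  have hd0 : (d : ℂ) ≠ 0 := Nat.cast_ne_zero.mpr hd.ne'
  have hk0' : (k : ℂ) ≠ 0 := Nat.cast_ne_zero.mpr hk.ne'
  push_cast
  field_simp

lemma innerSumRS (k d : ℕ) (j : ℤ) (hdk : d ∣ k) (hd : 0 < d) (hk : 0 < k) :
    ∑ m ∈ (Finset.Icc 1 k).filter (fun m => d ∣ m), eterm k j m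
      = if ((k / d : ℕ) : ℤ) ∣ j then ((k / d : ℕ) : ℂ) else 0 := by
  have hkd : 0 < k / d := Nat.div_pos (Nat.le_of_dvd hk hdk) hd
  have hbij : ∑ m ∈ (Finset.Icc 1 k).filter (fun m => d ∣ m), eterm k j m
      = ∑ t ∈ Finset.Icc 1 (k / d), eterm k j (d * t) := by
    refine (Finset.sum_nbij' (fun m => m / d) (fun t => d * t) ?_ ?_ ?_ ?_ ?_).symm.symm
    · intro m hm
      simp only [Finset.mem_filter, Finset.mem_Icc] at hm
      obtain ⟨⟨h1, h2⟩, hdm⟩ := hm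
      simp only [Finset.mem_Icc]
      exact ⟨(Nat.one_le_div_iff hd).mpr (Nat.le_of_dvd h1 hdm), Nat.div_le_div_right h2⟩
    · intro t ht
      simp only [Finset.mem_Icc] at ht
      simp only [Finset.mem_filter, Finset.mem_Icc]
      refine ⟨⟨Nat.one_le_iff_ne_zero.mpr (Nat.mul_ne_zero hd.ne' (by omega)), ?_⟩, Dvd.intro t rfl⟩
      calc d * t ≤ d * (k / d) := Nat.mul_le_mul_left d ht.2
        _ = k := Nat.mul_div_cancel' hdk
    · intro m hm
      exact Nat.mul_div_cancel' (Finset.mem_filter.mp hm).2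
    · intro t ht
      exact Nat.mul_div_cancel_left t hd
    · intro m hm
      rw [Nat.mul_div_cancel' (Finset.mem_filter.mp hm).2]
  rw [hbij, Finset.sum_congr rfl (fun t _ => eterm_mul k d j t hdk hd hk), expsum (k/d) hkd j]

lemma ramanujanSum_eq (k : ℕ) (hk : 0 < k) (j : ℤ) :
    ramanujanSum k j =
      ∑ e ∈ k.divisors, (moebius (k / e) : ℂ) * (if (e : ℤ) ∣ j then (e : ℂ) else 0) := by
  have step1 : ramanujanSum k j
      = ∑ m ∈ Finset.Icc 1 k, ∑ d ∈ k.divisors, (if d ∣ m then (moebius d : ℂ) * eterm k j m else 0) := by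
    rw [ramanujanSum_def', Finset.sum_filter]
    refine Finset.sum_congr rfl fun m hm => ?_
    have hm1 : 1 ≤ m := (Finset.mem_Icc.mp hm).1
    have hg : 0 < Nat.gcd m k := Nat.gcd_pos_of_pos_left k hm1
    have hdiv : (Nat.gcd m k).divisors = k.divisors.filter (· ∣ m) := by
      ext d
      simp only [Nat.mem_divisors, Finset.mem_filter, Nat.dvd_gcd_iff]
      constructor
      · rintro ⟨⟨h1, h2⟩, _⟩; exact ⟨⟨h2, hk.ne'⟩, h1⟩
      · rintro ⟨⟨h2, _⟩, h1⟩; exact ⟨⟨h1, h2⟩, hg.ne'⟩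
    have hthis := moebius_indicator (Nat.gcd m k)
    rw [hdiv, Finset.sum_filter] at hthis
    have hsum : ∑ d ∈ k.divisors, (if d ∣ m then (moebius d : ℂ) * eterm k j m else 0)
        = (∑ d ∈ k.divisors, (if d ∣ m then (moebius d : ℂ) else 0)) * eterm k j m := by
      rw [Finset.sum_mul]
      refine Finset.sum_congr rfl fun d _ => ?_
      split <;> simp
    rw [hsum, ← hthis]
    by_cases hgcd : Nat.gcd m k = 1 <;> simp [hgcd]
  rw [step1, Finset.sum_comm]
  have step2 : ∀ d ∈ k.divisors,
      (∑ m ∈ Finset.Icc 1 k, if d ∣ m then (moebius d : ℂ) * eterm k j m else 0)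
      = (moebius d : ℂ) * (if ((k / d : ℕ) : ℤ) ∣ j then ((k / d : ℕ) : ℂ) else 0) := by
    intro d hd
    obtain ⟨hdk, hk0⟩ := Nat.mem_divisors.mp hd
    have hdpos : 0 < d := Nat.pos_of_dvd_of_pos hdk hk
    rw [← Finset.sum_filter, ← Finset.mul_sum, innerSumRS k d j hdk hdpos hk]
  calc ∑ d ∈ k.divisors, ∑ m ∈ Finset.Icc 1 k, (if d ∣ m then (moebius d : ℂ) * eterm k j m else 0)
      = ∑ d ∈ k.divisors, (moebius d : ℂ) * (if ((k / d : ℕ) : ℤ) ∣ j then ((k / d : ℕ) : ℂ) else 0) :=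
        Finset.sum_congr rfl step2
    _ = ∑ d ∈ k.divisors, (moebius (k / (k / d)) : ℂ) * (if ((k / d : ℕ) : ℤ) ∣ j then ((k / d : ℕ) : ℂ) else 0) := by
        refine Finset.sum_congr rfl fun d hd => ?_
        rw [Nat.div_div_self (Nat.mem_divisors.mp hd).1 hk.ne']
    _ = ∑ e ∈ k.divisors, (moebius (k / e) : ℂ) * (if (e : ℤ) ∣ j then (e : ℂ) else 0) :=
        Nat.sum_div_divisors k (fun e => (moebius (k / e) : ℂ) * (if (e : ℤ) ∣ j then (e : ℂ) else 0))

lemma sum_filter_dvd (K L : ℕ) (hL : 0 < L) (c : ℂ) :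
    ∑ _m ∈ (Finset.Icc 1 K).filter (fun m => L ∣ m), c = ((K / L : ℕ) : ℂ) * c := by
  rw [Finset.sum_const]
  have hcard : ((Finset.Icc 1 K).filter (fun m => L ∣ m)).card = K / L := by
    rw [Finset.card_eq_of_bijective (fun i _ => L * (i + 1))]
    · intro m hm
      simp only [Finset.mem_filter, Finset.mem_Icc] at hm
      obtain ⟨⟨h1, h2⟩, t, rfl⟩ := hm
      have ht1 : 1 ≤ t := Nat.pos_of_ne_zero fun h => by simp [h] at h1
      have htK : t ≤ K / L := (Nat.le_div_iff_mul_le hL).mpr ((Nat.mul_comm L t) ▸ h2)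
      exact ⟨t - 1, by omega, by rw [Nat.sub_add_cancel ht1]⟩
    · intro i hi
      simp only [Finset.mem_filter, Finset.mem_Icc]
      refine ⟨⟨Nat.one_le_iff_ne_zero.mpr (Nat.mul_pos hL (Nat.succ_pos i)).ne', ?_⟩, ⟨i + 1, rfl⟩⟩
      calc L * (i + 1) ≤ L * (K / L) := Nat.mul_le_mul_left L (by omega)
        _ ≤ K := Nat.mul_div_le K L
    · intro i j _ _ h
      have := Nat.eq_of_mul_eq_mul_left hL h
      omega
  rw [hcard, nsmul_eq_mul]


lemma lcm_pos' {β : Type*} [DecidableEq β] (s : Finset β) (f : β → ℕ)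
    (hf : ∀ b ∈ s, 0 < f b) : 0 < s.lcm f := by
  induction s using Finset.induction with
  | empty => simp
  | insert _ _ hnotmem ih =>
    rw [Finset.lcm_insert]
    rename_i a s'
    have h1 : f a ≠ 0 := (hf a (Finset.mem_insert_self a s')).ne'
    have h2 : s'.lcm f ≠ 0 := (ih fun b hb => hf b (Finset.mem_insert_of_mem hb)).ne'
    exact Nat.pos_of_ne_zero (fun h => by rcases (lcm_eq_zero_iff _ _).mp h with h | h <;> [exact h1 h; exact h2 h])

theorem orbicyclic_eq_sum_over_divisor_tuples (n : ℕ) (hn : 0 < n)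
    (k : Fin n → ℕ) (hk : ∀ i, 0 < k i) (K : ℕ) (hK : K = Finset.univ.lcm k) :
    (1 / (K : ℂ)) * ∑ j ∈ Finset.Icc 1 K, ∏ i, ramanujanSum (k i) j =
      ∑ d ∈ Fintype.piFinset (fun i => (k i).divisors),
        (∏ i, (d i : ℂ) * (moebius (k i / d i) : ℂ)) / ((Finset.univ.lcm d : ℕ) : ℂ) := by
  have hKpos : 0 < K := hK ▸ lcm_pos' univ k (fun i _ => hk i)
  have hK0 : (K : ℂ) ≠ 0 := Nat.cast_ne_zero.mpr hKpos.ne'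
  have step1 : ∀ j : ℤ, ∏ i, ramanujanSum (k i) j
      = ∑ d ∈ Fintype.piFinset (fun i => (k i).divisors),
          ∏ i, ((moebius (k i / d i) : ℂ) * (if ((d i : ℕ) : ℤ) ∣ j then ((d i : ℕ) : ℂ) else 0)) := by
    intro j
    rw [Finset.prod_congr rfl (fun i _ => ramanujanSum_eq (k i) (hk i) j)]
    exact Finset.prod_univ_sum _ _
  have step2 : ∀ d ∈ Fintype.piFinset (fun i => (k i).divisors), ∀ j : ℤ,
      (∏ i, ((moebius (k i / d i) : ℂ) * (if ((d i : ℕ) : ℤ) ∣ j then ((d i : ℕ) : ℂ) else 0)))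
      = if ((Finset.univ.lcm d : ℕ) : ℤ) ∣ j then ∏ i, ((moebius (k i / d i) : ℂ) * (d i : ℂ)) else 0 := by
    intro d hd j
    have hdi : ∀ i, d i ∈ (k i).divisors := Fintype.mem_piFinset.mp hd
    by_cases hLj : ((Finset.univ.lcm d : ℕ) : ℤ) ∣ j
    · rw [if_pos hLj]
      refine Finset.prod_congr rfl fun i _ => ?_
      have : ((d i : ℕ) : ℤ) ∣ j :=
        dvd_trans (Int.natCast_dvd_natCast.mpr (Finset.dvd_lcm (Finset.mem_univ i))) hLj
      rw [if_pos this]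
    · rw [if_neg hLj]
      have : ¬ ∀ i, ((d i : ℕ) : ℤ) ∣ j := by
        intro hall
        apply hLj
        rw [Int.natCast_dvd]
        exact Finset.lcm_dvd fun i _ => Int.natCast_dvd.mp (hall i)
      push_neg at this
      obtain ⟨i, hi⟩ := this
      exact Finset.prod_eq_zero (Finset.mem_univ i) (by rw [if_neg hi, mul_zero])
  calc (1 / (K : ℂ)) * ∑ j ∈ Finset.Icc 1 K, ∏ i, ramanujanSum (k i) j
      = (1 / (K : ℂ)) * ∑ d ∈ Fintype.piFinset (fun i => (k i).divisors),
          ∑ j ∈ Finset.Icc 1 K,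
            (if ((Finset.univ.lcm d : ℕ) : ℤ) ∣ j then ∏ i, ((moebius (k i / d i) : ℂ) * (d i : ℂ)) else 0) := by
        congr 1
        rw [Finset.sum_congr rfl (fun j (_ : j ∈ Finset.Icc 1 K) => step1 (j : ℤ)), Finset.sum_comm]
        exact Finset.sum_congr rfl fun d hd => Finset.sum_congr rfl fun j _ => step2 d hd (j : ℤ)
    _ = ∑ d ∈ Fintype.piFinset (fun i => (k i).divisors),
        (∏ i, (d i : ℂ) * (moebius (k i / d i) : ℂ)) / ((Finset.univ.lcm d : ℕ) : ℂ) := by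
        rw [Finset.mul_sum]
        refine Finset.sum_congr rfl fun d hd => ?_
        have hdi : ∀ i, d i ∈ (k i).divisors := Fintype.mem_piFinset.mp hd
        set L : ℕ := Finset.univ.lcm d with hL
        have hLpos : 0 < L := lcm_pos' univ d fun i _ =>
          Nat.pos_of_mem_divisors (hdi i)
        have hLK : L ∣ K := by
          rw [hK]
          exact Finset.lcm_dvd fun i _ =>
            dvd_trans (Nat.mem_divisors.mp (hdi i)).1 (Finset.dvd_lcm (Finset.mem_univ i))
        have hL0 : (L : ℂ) ≠ 0 := Nat.cast_ne_zero.mpr hLpos.ne'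
        have hifsum : ∑ j ∈ Finset.Icc 1 K,
            (if ((L : ℕ) : ℤ) ∣ j then ∏ i, ((moebius (k i / d i) : ℂ) * (d i : ℂ)) else 0)
            = ((K / L : ℕ) : ℂ) * ∏ i, ((moebius (k i / d i) : ℂ) * (d i : ℂ)) := by
          rw [← Finset.sum_filter]
          rw [show (Finset.Icc 1 K).filter (fun j : ℕ => ((L : ℕ) : ℤ) ∣ (j : ℤ))
              = (Finset.Icc 1 K).filter (fun j : ℕ => L ∣ j) by
            refine Finset.filter_congr fun j _ => ?_
            simp [Int.natCast_dvd_natCast]]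
          exact sum_filter_dvd K L hLpos _
        rw [hifsum, Nat.cast_div hLK hL0]
        rw [show ∏ i, ((moebius (k i / d i) : ℂ) * (d i : ℂ)) = ∏ i, ((d i : ℂ) * (moebius (k i / d i) : ℂ)) from
          Finset.prod_congr rfl fun i _ => mul_comm _ _]
        field_simp
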